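/- Every finite simple graph G admits an orientation of its edges such that at every vertex the out-degree and the in-degree differ by at most 1. Precisely, there exists a relation R on the vertices of G such that for all vertices u, v: G.Adj u v ↔ (R u v ∨ R v u), never both R u v and R v u, never R v v, and for every vertex v, the number of vertices u with R v u and the number of vertices u with R u v differ by at most 1. -/

import Mathlib

open SimpleGraph

private lemma dart_count_eq {V : Type*} [Fintype V] {G : SimpleGraph V} {a : V}
    {c : G.Walk a a} (hc : c.IsCycle) (v : V) :
    {u | ∃ d ∈ c.darts, d.toProd = (v, u)}.ncard
      = {u | ∃ d ∈ c.darts, d.toProd = (u, v)}.ncard := by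
  classical
  have htnodup : c.support.tail.Nodup := hc.support_nodup
  have hsupp : c.support = a :: c.support.tail := c.support_eq_cons
  have hlen : c.support.length = c.length + 1 := c.length_support
  have h3 : 3 ≤ c.length := hc.three_le_length
  have htne : c.support.tail ≠ [] := by
    intro h
    rw [hsupp, h] at hlen
    simp only [List.length_cons, List.length_nil] at hlen
    omega
  have hlast : c.support.tail.getLast htne = a := by
    rw [List.getLast_tail]
    exact c.getLast_support
  have htsplit : c.support.tail.dropLast ++ [a] = c.support.tail := by
    conv_rhs => rw [← List.dropLast_append_getLast htne]
    rw [hlast]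
  have hnd2 : c.support.tail.dropLast.Nodup ∧ a ∉ c.support.tail.dropLast := by
    rw [← htsplit, List.nodup_append] at htnodup
    exact ⟨htnodup.1, fun h => htnodup.2.2 a h a (by simp) rfl⟩
  have hfst : c.darts.map (·.fst) = a :: c.support.tail.dropLast := by
    rw [c.map_fst_darts]
    conv_lhs => rw [hsupp]
    rw [List.dropLast_cons_of_ne_nil htne]
  have hsnd : c.darts.map (·.snd) = c.support.tail := c.map_snd_darts
  have hfstnodup : (c.darts.map (·.fst)).Nodup := by
    rw [hfst]; exact List.nodup_cons.mpr ⟨hnd2.2, hnd2.1⟩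
  have hsndnodup : (c.darts.map (·.snd)).Nodup := by rw [hsnd]; exact htnodup
  have hmem : ∀ x, x ∈ c.darts.map (·.fst) ↔ x ∈ c.darts.map (·.snd) := by
    intro x
    rw [hfst, hsnd, ← htsplit]
    simp [or_comm]
  have hAsub : {u | ∃ d ∈ c.darts, d.toProd = (v, u)}.Subsingleton := by
    rintro u1 ⟨d1, hd1, he1⟩ u2 ⟨d2, hd2, he2⟩
    have h12 : d1 = d2 := by
      refine List.inj_on_of_nodup_map hfstnodup hd1 hd2 ?_
      show d1.toProd.1 = d2.toProd.1
      rw [he1, he2]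
    rw [h12, he2] at he1
    exact (Prod.ext_iff.mp he1).2.symm
  have hBsub : {u | ∃ d ∈ c.darts, d.toProd = (u, v)}.Subsingleton := by
    rintro u1 ⟨d1, hd1, he1⟩ u2 ⟨d2, hd2, he2⟩
    have h12 : d1 = d2 := by
      refine List.inj_on_of_nodup_map hsndnodup hd1 hd2 ?_
      show d1.toProd.2 = d2.toProd.2
      rw [he1, he2]
    rw [h12, he2] at he1
    exact (Prod.ext_iff.mp he1).1.symm
  have hiff : {u | ∃ d ∈ c.darts, d.toProd = (v, u)}.Nonempty ↔
      {u | ∃ d ∈ c.darts, d.toProd = (u, v)}.Nonempty := by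
    constructor
    · rintro ⟨u, d, hd, he⟩
      have hv : v ∈ c.darts.map (·.snd) := by
        rw [← hmem]
        exact List.mem_map.mpr ⟨d, hd, by rw [show d.fst = d.toProd.1 from rfl, he]⟩
      obtain ⟨d', hd', he'⟩ := List.mem_map.mp hv
      exact ⟨d'.toProd.1, d', hd', by rw [show d'.snd = d'.toProd.2 from rfl] at he'; rw [← he']⟩
    · rintro ⟨u, d, hd, he⟩
      have hv : v ∈ c.darts.map (·.fst) := by
        rw [hmem]
        exact List.mem_map.mpr ⟨d, hd, by rw [show d.snd = d.toProd.2 from rfl, he]⟩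
      obtain ⟨d', hd', he'⟩ := List.mem_map.mp hv
      exact ⟨d'.toProd.2, d', hd', by rw [show d'.fst = d'.toProd.1 from rfl] at he'; rw [← he']⟩
  by_cases hne : {u | ∃ d ∈ c.darts, d.toProd = (v, u)}.Nonempty
  · have hne' := hiff.mp hne
    have hle1 : {u | ∃ d ∈ c.darts, d.toProd = (v, u)}.ncard ≤ 1 :=
      (Set.ncard_le_one (Set.toFinite _)).mpr fun _ h _ h' => hAsub h h'
    have hle2 : {u | ∃ d ∈ c.darts, d.toProd = (u, v)}.ncard ≤ 1 :=
      (Set.ncard_le_one (Set.toFinite _)).mpr fun _ h _ h' => hBsub h h'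
    have hp1 : 0 < {u | ∃ d ∈ c.darts, d.toProd = (v, u)}.ncard :=
      (Set.ncard_pos (Set.toFinite _)).mpr hne
    have hp2 : 0 < {u | ∃ d ∈ c.darts, d.toProd = (u, v)}.ncard :=
      (Set.ncard_pos (Set.toFinite _)).mpr hne'
    omega
  · have hne' : ¬ {u | ∃ d ∈ c.darts, d.toProd = (u, v)}.Nonempty := fun h => hne (hiff.mpr h)
    rw [Set.not_nonempty_iff_eq_empty.mp hne, Set.not_nonempty_iff_eq_empty.mp hne']

private theorem stmt4_aux {V : Type*} [Fintype V] :
    ∀ (n : ℕ) (G : SimpleGraph V), G.edgeSet.ncard = n →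
    ∃ R : V → V → Prop,
      (∀ u v, G.Adj u v ↔ (R u v ∨ R v u)) ∧
      (∀ u v, ¬ (R u v ∧ R v u)) ∧
      (∀ v, ¬ R v v) ∧
      (∀ v, {u | R v u}.ncard ≤ {u | R u v}.ncard + 1 ∧
            {u | R u v}.ncard ≤ {u | R v u}.ncard + 1) := by
  intro n
  induction n using Nat.strong_induction_on with
  | _ n ih =>
  intro G hn
  classical
  by_cases hbot : ∀ u v, ¬ G.Adj u v
  · exact ⟨fun _ _ => False, fun u v => by simp [hbot u v], by simp, by simp, by simp⟩
  push_neg at hbot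
  obtain ⟨a, b, hab⟩ := hbot
  by_cases hA : G.IsAcyclic
  · -- acyclic case: delete the bridge edge s(a,b)
    set G' := G.deleteEdges {s(a, b)} with hG'
    have hG'adj : ∀ u v, G'.Adj u v ↔ G.Adj u v ∧ s(u, v) ≠ s(a, b) := by
      intro u v; rw [hG', SimpleGraph.deleteEdges_adj]; simp
    have hG'ab : ¬ G'.Adj a b := by simp [hG'adj]
    have hlt : G'.edgeSet.ncard < n := by
      rw [← hn]
      apply Set.ncard_lt_ncard _ (Set.toFinite _)
      rw [hG', edgeSet_deleteEdges]
      exact (Set.ssubset_iff_of_subset Set.diff_subset).mpr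
        ⟨s(a, b), G.mem_edgeSet.mpr hab, fun h => h.2 rfl⟩
    obtain ⟨R', h1, h2, h3, h4⟩ := ih _ hlt G' rfl
    have hR'adj : ∀ u v, R' u v → G'.Adj u v := fun u v h => (h1 u v).mpr (Or.inl h)
    have hreach : ¬ G'.Reachable a b := by
      have hb := (isAcyclic_iff_forall_adj_isBridge.mp hA) hab
      exact SimpleGraph.isBridge_iff.mp hb
    set F : Set V := {v | ({u | R' u a}.ncard < {u | R' a u}.ncard ∧ G'.Reachable a v) ∨
      ({u | R' b u}.ncard < {u | R' u b}.ncard ∧ G'.Reachable b v)} with hF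
    have hFadj : ∀ u v, G'.Adj u v → (u ∈ F ↔ v ∈ F) := by
      intro u v huv
      constructor <;> rintro (⟨h, hr⟩ | ⟨h, hr⟩)
      · exact Or.inl ⟨h, hr.trans huv.reachable⟩
      · exact Or.inr ⟨h, hr.trans huv.reachable⟩
      · exact Or.inl ⟨h, hr.trans huv.symm.reachable⟩
      · exact Or.inr ⟨h, hr.trans huv.symm.reachable⟩
    have haF : a ∈ F ↔ {u | R' u a}.ncard < {u | R' a u}.ncard := by
      constructor
      · rintro (⟨h, _⟩ | ⟨_, hr⟩)
        · exact h
        · exact absurd hr.symm hreach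
      · intro h; exact Or.inl ⟨h, Reachable.refl a⟩
    have hbF : b ∈ F ↔ {u | R' b u}.ncard < {u | R' u b}.ncard := by
      constructor
      · rintro (⟨_, hr⟩ | ⟨h, _⟩)
        · exact absurd hr hreach
        · exact h
      · intro h; exact Or.inr ⟨h, Reachable.refl b⟩
    set R₀ : V → V → Prop := fun u v => if u ∈ F then R' v u else R' u v with hR₀
    have hR₀adj : ∀ u v, R₀ u v → G'.Adj u v := by
      intro u v h
      simp only [hR₀] at h
      by_cases hu : u ∈ F
      · rw [if_pos hu] at h; exact (hR'adj _ _ h).symm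
      · rw [if_neg hu] at h; exact hR'adj _ _ h
    have hout₀ : ∀ v, {u | R₀ v u} = if v ∈ F then {u | R' u v} else {u | R' v u} := by
      intro v; ext u; by_cases hv : v ∈ F <;> simp [hR₀, hv]
    have hin₀ : ∀ v, {u | R₀ u v} = if v ∈ F then {u | R' v u} else {u | R' u v} := by
      intro v; ext u
      by_cases hu : u ∈ F <;> by_cases hv : v ∈ F <;> simp only [hR₀, Set.mem_setOf_eq,
        if_pos, if_neg, hu, hv, if_true, if_false]
      · exact iff_of_false (fun h => hv ((hFadj v u (hR'adj _ _ h)).mpr hu))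
          (fun h => hv ((hFadj u v (hR'adj _ _ h)).mp hu))
      · exact iff_of_false (fun h => hu ((hFadj u v (hR'adj _ _ h)).mpr hv))
          (fun h => hu ((hFadj v u (hR'adj _ _ h)).mp hv))
    have h4₀ : ∀ v, {u | R₀ v u}.ncard ≤ {u | R₀ u v}.ncard + 1 ∧
        {u | R₀ u v}.ncard ≤ {u | R₀ v u}.ncard + 1 := by
      intro v
      rw [hout₀ v, hin₀ v]
      by_cases hv : v ∈ F
      · rw [if_pos hv, if_pos hv]; exact ⟨(h4 v).2, (h4 v).1⟩
      · rw [if_neg hv, if_neg hv]; exact h4 v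
    have hR₀iff : ∀ u v, G'.Adj u v → (R₀ u v ∨ R₀ v u ↔ R' u v ∨ R' v u) := by
      intro u v huv
      have hm := hFadj u v huv
      by_cases hu : u ∈ F
      · have hv := hm.mp hu
        simp only [hR₀, if_pos hu, if_pos hv]
        exact or_comm
      · have hv : v ∉ F := fun h => hu (hm.mpr h)
        simp only [hR₀, if_neg hu, if_neg hv]
    refine ⟨fun u v => R₀ u v ∨ (u = a ∧ v = b), ?_, ?_, ?_, ?_⟩
    · intro u v
      constructor
      · intro huv
        by_cases he : s(u, v) = s(a, b)
        · rcases Sym2.eq_iff.mp he with ⟨rfl, rfl⟩ | ⟨rfl, rfl⟩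
          · exact Or.inl (Or.inr ⟨rfl, rfl⟩)
          · exact Or.inr (Or.inr ⟨rfl, rfl⟩)
        · have hadj' : G'.Adj u v := (hG'adj u v).mpr ⟨huv, he⟩
          rcases (hR₀iff u v hadj').mpr ((h1 u v).mp hadj') with h | h
          · exact Or.inl (Or.inl h)
          · exact Or.inr (Or.inl h)
      · rintro ((h | ⟨rfl, rfl⟩) | (h | ⟨rfl, rfl⟩))
        · exact ((hG'adj u v).mp (hR₀adj u v h)).1
        · exact hab
        · exact ((hG'adj v u).mp (hR₀adj v u h)).1.symm
        · exact hab.symm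
    · rintro u v ⟨(h | ⟨ha, hb⟩), (h' | ⟨h'a, h'b⟩)⟩
      · have hadj := hR₀adj u v h
        have hm := hFadj u v hadj
        by_cases hu : u ∈ F
        · have hv := hm.mp hu
          simp only [hR₀, if_pos hu] at h
          simp only [hR₀, if_pos hv] at h'
          exact h2 v u ⟨h, h'⟩
        · have hv : v ∉ F := fun hh => hu (hm.mpr hh)
          simp only [hR₀, if_neg hu] at h
          simp only [hR₀, if_neg hv] at h'
          exact h2 u v ⟨h, h'⟩
      · rw [h'b, h'a] at h
        exact hG'ab ((hR₀adj _ _ h).symm)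
      · rw [hb, ha] at h'
        exact hG'ab ((hR₀adj _ _ h').symm)
      · exact hab.ne (ha.symm.trans h'b)
    · rintro v (h | ⟨rfl, h⟩)
      · exact G'.irrefl (hR₀adj v v h)
      · exact hab.ne h
    · intro v
      by_cases hva : v = a
      · have hsout : {u | R₀ v u ∨ (v = a ∧ u = b)} = insert b {u | R₀ v u} := by
          ext u; simp [hva, or_comm]
        have hsin : {u | R₀ u v ∨ (u = a ∧ v = b)} = {u | R₀ u v} := by
          ext u
          simp only [Set.mem_setOf_eq, or_iff_left_iff_imp]
          rintro ⟨rfl, h⟩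
          exact absurd (hva.symm.trans h) hab.ne
        have hbnot : b ∉ {u | R₀ v u} := fun h => hG'ab (by rw [← hva]; exact hR₀adj _ _ h)
        rw [hsout, hsin, Set.ncard_insert_of_notMem hbnot (Set.toFinite _)]
        have hle : {u | R₀ v u}.ncard ≤ {u | R₀ u v}.ncard := by
          rw [hout₀ v, hin₀ v]
          by_cases hv : v ∈ F
          · rw [if_pos hv, if_pos hv, hva]
            exact le_of_lt (haF.mp (hva ▸ hv))
          · rw [if_neg hv, if_neg hv, hva]
            exact le_of_not_gt (fun h => hv (hva ▸ haF.mpr h))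
        have := h4₀ v
        omega
      · by_cases hvb : v = b
        · have hsout : {u | R₀ v u ∨ (v = a ∧ u = b)} = {u | R₀ v u} := by
            ext u
            simp only [Set.mem_setOf_eq, or_iff_left_iff_imp]
            rintro ⟨h, rfl⟩
            exact absurd (h.symm.trans hvb) hab.ne
          have hsin : {u | R₀ u v ∨ (u = a ∧ v = b)} = insert a {u | R₀ u v} := by
            ext u; simp [hvb, or_comm, and_comm]
          have hanot : a ∉ {u | R₀ u v} := fun h => hG'ab (by rw [← hvb]; exact hR₀adj _ _ h)
          rw [hsout, hsin, Set.ncard_insert_of_notMem hanot (Set.toFinite _)]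
          have hle : {u | R₀ u v}.ncard ≤ {u | R₀ v u}.ncard := by
            rw [hout₀ v, hin₀ v]
            by_cases hv : v ∈ F
            · rw [if_pos hv, if_pos hv, hvb]
              exact le_of_lt (hbF.mp (hvb ▸ hv))
            · rw [if_neg hv, if_neg hv, hvb]
              exact le_of_not_gt (fun h => hv (hvb ▸ hbF.mpr h))
          have := h4₀ v
          omega
        · have hsout : {u | R₀ v u ∨ (v = a ∧ u = b)} = {u | R₀ v u} := by
            ext u; simp [hva]
          have hsin : {u | R₀ u v ∨ (u = a ∧ v = b)} = {u | R₀ u v} := by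
            ext u; simp [hvb]
          rw [hsout, hsin]
          exact h4₀ v
  · -- cycle case
    simp only [SimpleGraph.IsAcyclic, not_forall, not_not] at hA
    obtain ⟨w, c, hc⟩ := hA
    set G' := G.deleteEdges {e | e ∈ c.edges} with hG'
    have hG'adj : ∀ u v, G'.Adj u v ↔ G.Adj u v ∧ s(u, v) ∉ c.edges := by
      intro u v; rw [hG', SimpleGraph.deleteEdges_adj]; rfl
    have hlt : G'.edgeSet.ncard < n := by
      rw [← hn]
      apply Set.ncard_lt_ncard _ (Set.toFinite _)
      rw [hG', edgeSet_deleteEdges]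
      have hne : c.edges ≠ [] := by
        intro h
        have h3 := hc.three_le_length
        have hl := c.length_edges
        rw [h] at hl
        simp at hl
        omega
      obtain ⟨e, he⟩ := List.exists_mem_of_ne_nil _ hne
      exact (Set.ssubset_iff_of_subset Set.diff_subset).mpr
        ⟨e, c.edges_subset_edgeSet he, fun h => h.2 he⟩
    obtain ⟨R', h1, h2, h3, h4⟩ := ih _ hlt G' rfl
    have hR'adj : ∀ u v, R' u v → G'.Adj u v := fun u v h => (h1 u v).mpr (Or.inl h)
    set Rd : V → V → Prop := fun u v => ∃ d ∈ c.darts, d.toProd = (u, v) with hRd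
    have hRdadj : ∀ u v, Rd u v → G.Adj u v := by
      rintro u v ⟨d, hd, he⟩
      have hda := d.adj
      rw [show d.fst = d.toProd.1 from rfl, show d.snd = d.toProd.2 from rfl, he] at hda
      exact hda
    have hRdedge : ∀ u v, Rd u v → s(u, v) ∈ c.edges := by
      rintro u v ⟨d, hd, he⟩
      have hde : d.edge = s(u, v) := by rw [SimpleGraph.Dart.edge, he]
      rw [← hde]
      exact List.mem_map_of_mem (f := SimpleGraph.Dart.edge) hd
    have hedgeRd : ∀ u v, s(u, v) ∈ c.edges → Rd u v ∨ Rd v u := by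
      intro u v he
      obtain ⟨d, hd, hde⟩ := List.mem_map.mp he
      rcases SimpleGraph.dart_edge_eq_mk'_iff.mp hde with h | h
      · exact Or.inl ⟨d, hd, h⟩
      · exact Or.inr ⟨d, hd, h⟩
    have hRdasym : ∀ u v, ¬ (Rd u v ∧ Rd v u) := by
      rintro u v ⟨h1', h2'⟩
      obtain ⟨d1, hd1, he1⟩ := h1'
      obtain ⟨d2, hd2, he2⟩ := h2'
      have hadj := hRdadj u v ⟨d1, hd1, he1⟩
      have hnodup : (c.darts.map SimpleGraph.Dart.edge).Nodup := hc.isCircuit.isTrail.edges_nodup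
      have hedge : d1.edge = d2.edge := by
        rw [SimpleGraph.Dart.edge, SimpleGraph.Dart.edge, he1, he2]
        exact Sym2.eq_swap
      have h12 : d1 = d2 := List.inj_on_of_nodup_map hnodup hd1 hd2 hedge
      rw [h12, he2] at he1
      exact hadj.ne (Prod.ext_iff.mp he1).2
    refine ⟨fun u v => R' u v ∨ Rd u v, ?_, ?_, ?_, ?_⟩
    · intro u v
      constructor
      · intro huv
        by_cases he : s(u, v) ∈ c.edges
        · rcases hedgeRd u v he with h | h
          · exact Or.inl (Or.inr h)
          · exact Or.inr (Or.inr h)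
        · rcases (h1 u v).mp ((hG'adj u v).mpr ⟨huv, he⟩) with h | h
          · exact Or.inl (Or.inl h)
          · exact Or.inr (Or.inl h)
      · rintro ((h | h) | (h | h))
        · exact ((hG'adj u v).mp (hR'adj u v h)).1
        · exact hRdadj u v h
        · exact ((hG'adj v u).mp (hR'adj v u h)).1.symm
        · exact (hRdadj v u h).symm
    · rintro u v ⟨(h | h), (h' | h')⟩
      · exact h2 u v ⟨h, h'⟩
      · exact ((hG'adj u v).mp (hR'adj u v h)).2 (Sym2.eq_swap ▸ hRdedge v u h')
      · exact ((hG'adj v u).mp (hR'adj v u h')).2 (Sym2.eq_swap ▸ hRdedge u v h)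
      · exact hRdasym u v ⟨h, h'⟩
    · rintro v (h | h)
      · exact G'.irrefl (hR'adj v v h)
      · exact G.irrefl (hRdadj v v h)
    · intro v
      have hdisj1 : Disjoint {u | R' v u} {u | Rd v u} := by
        rw [Set.disjoint_left]
        intro u h hd
        exact ((hG'adj v u).mp (hR'adj v u h)).2 (hRdedge v u hd)
      have hdisj2 : Disjoint {u | R' u v} {u | Rd u v} := by
        rw [Set.disjoint_left]
        intro u h hd
        exact ((hG'adj u v).mp (hR'adj u v h)).2 (hRdedge u v hd)
      have e1 : {u | R' v u ∨ Rd v u}.ncard = {u | R' v u}.ncard + {u | Rd v u}.ncard := by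
        rw [Set.setOf_or]
        exact Set.ncard_union_eq hdisj1 (Set.toFinite _) (Set.toFinite _)
      have e2 : {u | R' u v ∨ Rd u v}.ncard = {u | R' u v}.ncard + {u | Rd u v}.ncard := by
        rw [Set.setOf_or]
        exact Set.ncard_union_eq hdisj2 (Set.toFinite _) (Set.toFinite _)
      have heq : {u | Rd v u}.ncard = {u | Rd u v}.ncard := by
        simp only [hRd]
        exact dart_count_eq hc v
      have := h4 v
      constructor
      · rw [e1, e2, heq]; omega
      · rw [e1, e2, heq]; omega

/-- Every finite simple graph admits an orientation of its edges such that at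
every vertex the out-degree and the in-degree differ by at most 1. -/
theorem stmt_4 {V : Type*} [Fintype V] (G : SimpleGraph V) :
    ∃ R : V → V → Prop,
      (∀ u v, G.Adj u v ↔ (R u v ∨ R v u)) ∧
      (∀ u v, ¬ (R u v ∧ R v u)) ∧
      (∀ v, ¬ R v v) ∧
      (∀ v, {u | R v u}.ncard ≤ {u | R u v}.ncard + 1 ∧
            {u | R u v}.ncard ≤ {u | R v u}.ncard + 1) := by
  exact stmt4_aux _ G rfl
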